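/- Let λ_2, ..., λ_n be complex numbers whose multiset is closed under complex conjugation. Then there exists a real number r ≥ 0 and an entrywise nonnegative real n×n matrix D with every row sum and every column sum equal to r such that the characteristic polynomial of D, viewed over ℂ, equals (t − r)·∏_{j=2}^{n}(t − λ_j). -/

import Mathlib

open Polynomial Matrix

lemma exists_matrix_charpoly_eq (q : ℝ[X]) (hq : q.Monic) :
    ∃ A : Matrix (Fin q.natDegree) (Fin q.natDegree) ℝ, A.charpoly = q := by
  have h0 : q ≠ 0 := hq.ne_zero
  let pb := AdjoinRoot.powerBasis h0
  have hdim : pb.dim = q.natDegree := rfl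
  refine ⟨Matrix.reindex (finCongr hdim) (finCongr hdim)
      (Algebra.leftMulMatrix pb.basis pb.gen), ?_⟩
  rw [Matrix.charpoly_reindex, _root_.charpoly_leftMulMatrix,
    AdjoinRoot.minpoly_powerBasis_gen_of_monic hq]

lemma exists_real_lift (m : ℕ) (lam : Fin m → ℂ)
    (hconj : ∃ σ : Equiv.Perm (Fin m), ∀ i, lam (σ i) = starRingEnd ℂ (lam i)) :
    ∃ q : ℝ[X], q.Monic ∧ q.natDegree = m ∧
      q.map Complex.ofRealHom = ∏ i, (X - C (lam i)) := by
  obtain ⟨σ, hσ⟩ := hconj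
  set p : ℂ[X] := ∏ i, (X - C (lam i)) with hp
  have hpm : p.Monic := monic_prod_of_monic _ _ fun i _ => monic_X_sub_C _
  have hpd : p.natDegree = m := by
    rw [hp, natDegree_prod _ _ fun i _ => X_sub_C_ne_zero _]
    simp
  have hfix : p.map (starRingEnd ℂ) = p := by
    rw [hp, Polynomial.map_prod]
    have : ∀ i : Fin m, (X - C (lam i)).map (starRingEnd ℂ)
        = X - C (lam (σ i)) := by
      intro i
      simp [Polynomial.map_sub, hσ i]
    rw [Finset.prod_congr rfl fun i _ => this i]
    exact Equiv.prod_comp σ fun i => X - C (lam i)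
  have hcoeff : ∀ k, p.coeff k ∈ Set.range Complex.ofRealHom := by
    intro k
    have : (starRingEnd ℂ) (p.coeff k) = p.coeff k := by
      conv_rhs => rw [← hfix]
      simp [coeff_map]
    rw [Complex.conj_eq_iff_re] at this
    exact ⟨(p.coeff k).re, this⟩
  have hl : p ∈ Polynomial.lifts Complex.ofRealHom :=
    (lifts_iff_coeff_lifts p).mpr hcoeff
  obtain ⟨q, hq, _, hqm⟩ := Polynomial.lifts_and_degree_eq_and_monic hl hpm
  refine ⟨q, hqm, ?_, hq⟩
  have := Polynomial.natDegree_map_eq_of_injective (f := Complex.ofRealHom) Complex.ofReal_injective q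
  rw [hq, hpd] at this
  exact this.symm

lemma charpoly_orth_conj {n : Type*} [Fintype n] [DecidableEq n]
    (Q A : Matrix n n ℝ) (h1 : Q * Qᵀ = 1) :
    (Q * A * Qᵀ).charpoly = A.charpoly := by
  have hmap : ∀ M N : Matrix n n ℝ, (M * N).map (C : ℝ → ℝ[X]) = M.map C * N.map C :=
    fun M N => Matrix.map_mul (f := (C : ℝ →+* ℝ[X]))
  have key : charmatrix (Q * A * Qᵀ)
      = Q.map (C : ℝ → ℝ[X]) * charmatrix A * Qᵀ.map (C : ℝ → ℝ[X]) := by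
    rw [charmatrix, charmatrix, Matrix.mul_sub, Matrix.sub_mul]
    simp only [RingHom.mapMatrix_apply]
    congr 1
    · rw [Matrix.mul_assoc, scalar_commute (X : ℝ[X]) (Commute.all X) (Qᵀ.map C),
        ← Matrix.mul_assoc, ← hmap, h1]
      rw [Matrix.map_one _ (map_zero _) (map_one _), Matrix.one_mul]
    · rw [← hmap, ← hmap]
  rw [Matrix.charpoly, key, Matrix.det_mul, Matrix.det_mul, Matrix.charpoly]
  have hdet : (Q.map (C : ℝ → ℝ[X])).det * (Qᵀ.map (C : ℝ → ℝ[X])).det = 1 := by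
    have h := RingHom.map_det (C : ℝ →+* ℝ[X]) (Q * Qᵀ)
    rw [RingHom.mapMatrix_apply, hmap, Matrix.det_mul] at h
    rw [← Matrix.det_mul, h1, Matrix.det_one, _root_.map_one] at h
    rw [Matrix.det_mul] at h
    exact h.symm
  calc (Q.map (C : ℝ → ℝ[X])).det * (charmatrix A).det * (Qᵀ.map (C : ℝ → ℝ[X])).det
      = (Q.map (C : ℝ → ℝ[X])).det * (Qᵀ.map (C : ℝ → ℝ[X])).det * (charmatrix A).det := by
        ring
    _ = (charmatrix A).det := by rw [hdet, one_mul]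

/-- Let `λ_2, …, λ_n` (here `lam 0, …, lam (m-1)` with `n = m+1`) be complex numbers
whose multiset is closed under complex conjugation.  Then there exist `r ≥ 0` and an
entrywise nonnegative real `n × n` matrix `D` with every row and column sum equal to `r`
whose characteristic polynomial, viewed over `ℂ`, equals
`(t - r) · ∏_{j=2}^{n} (t - λ_j)`. -/
theorem stmt16 (m : ℕ) (lam : Fin m → ℂ)
    (hconj : ∃ σ : Equiv.Perm (Fin m), ∀ i, lam (σ i) = starRingEnd ℂ (lam i)) :
    ∃ r : ℝ, 0 ≤ r ∧
      ∃ D : Matrix (Fin (m + 1)) (Fin (m + 1)) ℝ,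
        (∀ i j, 0 ≤ D i j) ∧
        (∀ i, ∑ j, D i j = r) ∧
        (∀ j, ∑ i, D i j = r) ∧
        (D.map (Complex.ofReal)).charpoly = (X - C (r : ℂ)) * ∏ i, (X - C (lam i)) := by
  classical
  -- the real polynomial
  obtain ⟨q, hqm, hdq, hqmap⟩ := exists_real_lift m lam hconj
  obtain ⟨A₀, hA₀⟩ := exists_matrix_charpoly_eq q hqm
  set A : Matrix (Fin m) (Fin m) ℝ :=
    Matrix.reindex (finCongr hdq) (finCongr hdq) A₀ with hAdef
  have hA : A.charpoly = q := by rw [hAdef, Matrix.charpoly_reindex, hA₀]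
  -- the orthonormal basis
  set ι := (Fin 1 ⊕ Fin m) with hι
  set c : ℝ := (Real.sqrt (m + 1))⁻¹ with hc
  have hsq : Real.sqrt (m+1) > 0 := Real.sqrt_pos.mpr (by positivity)
  have hcc : c * c = ((m : ℝ) + 1)⁻¹ := by
    rw [hc, ← mul_inv]
    rw [Real.mul_self_sqrt (by positivity)]
  set v : ι → EuclideanSpace ℝ ι := fun _ => WithLp.toLp 2 (fun _ => c) with hv
  have hcard : Module.finrank ℝ (EuclideanSpace ℝ ι) = Fintype.card ι := by
    simp [finrank_euclideanSpace]
  have hon : Orthonormal ℝ (Set.restrict {Sum.inl 0} v) := by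
    rw [orthonormal_iff_ite]
    rintro ⟨i, hi⟩ ⟨j, hj⟩
    simp only [Set.mem_singleton_iff] at hi hj
    subst hi; subst hj
    simp only [Set.restrict_apply, if_pos rfl]
    rw [PiLp.inner_apply]
    simp only [hv, Set.domRestrict_apply, WithLp.ofLp_toLp, RCLike.inner_apply, starRingEnd_apply, star_trivial]
    change ∑ _x : ι, c * c = (1:ℝ)
    rw [Finset.sum_const, Finset.card_univ]
    have : (Fintype.card ι : ℝ) = (m : ℝ) + 1 := by
      simp [hι]; push_cast; ring
    rw [nsmul_eq_mul, this, hcc]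
    field_simp
  obtain ⟨b, hb⟩ := hon.exists_orthonormalBasis_extension_of_card_eq hcard
  have hb0 : b (Sum.inl 0) = v (Sum.inl 0) := hb _ rfl
  set Q : Matrix ι ι ℝ := Matrix.of (fun i j => b j i) with hQdef
  have hQ0 : ∀ i, Q i (Sum.inl 0) = c := by
    intro i; rw [hQdef]; simp only [Matrix.of_apply, hb0, hv, WithLp.ofLp_toLp]
  have hinner : ∀ k l : ι, ∑ i, Q i k * Q i l = if k = l then 1 else 0 := by
    intro k l
    have := (orthonormal_iff_ite (𝕜 := ℝ)).mp b.orthonormal k l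
    rw [PiLp.inner_apply] at this
    simpa [hQdef, RCLike.inner_apply, starRingEnd_apply, mul_comm] using this
  have horth : Qᵀ * Q = 1 := by
    ext k l
    rw [Matrix.mul_apply]
    simp only [Matrix.transpose_apply]
    rw [hinner k l, Matrix.one_apply]
  have h1 : Q * Qᵀ = 1 := mul_eq_one_comm.mp horth
  have hcol : ∀ l, ∑ j, Q j l = if l = Sum.inl 0 then Real.sqrt (m+1) else 0 := by
    intro l
    have h := hinner l (Sum.inl 0)
    have h2 : ∑ i, Q i l * Q i (Sum.inl 0) = (∑ i, Q i l) * c := by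
      rw [Finset.sum_mul]
      exact Finset.sum_congr rfl fun i _ => by rw [hQ0]
    rw [h2] at h
    have hcne : c ≠ 0 := by rw [hc]; positivity
    split_ifs at h ⊢ with hl
    · field_simp [hc] at h ⊢
      rw [eq_inv_of_mul_eq_one_left h, hc, inv_inv]
    · exact (mul_eq_zero.mp h).resolve_right hcne
  -- matrices
  set B0 : Matrix ι ι ℝ := Matrix.fromBlocks 0 0 0 A with hB0
  set P : Matrix ι ι ℝ := Q * B0 * Qᵀ with hP
  set r : ℝ := ((m : ℝ) + 1) * ∑ i, ∑ j, |P i j| with hr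
  have hr0 : 0 ≤ r := by
    rw [hr]
    have : 0 ≤ ∑ i, ∑ j, |P i j| :=
      Finset.sum_nonneg fun i _ => Finset.sum_nonneg fun j _ => abs_nonneg _
    positivity
  set E : Matrix ι ι ℝ := Matrix.single (Sum.inl 0) (Sum.inl 0) (1:ℝ) with hE
  set Br : Matrix ι ι ℝ :=
    Matrix.fromBlocks (Matrix.of fun _ _ => r) 0 0 A with hBr
  have hBsplit : Br = r • E + B0 := by
    ext i j
    rcases i with i | i <;> rcases j with j | j <;>
      simp [hBr, hB0, hE, Matrix.single, Fin.fin_one_eq_zero,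
        Matrix.fromBlocks]
  set D : Matrix ι ι ℝ := Q * Br * Qᵀ with hD
  have hQE : ∀ i l, (Q * E) i l = if l = Sum.inl 0 then c else 0 := by
    intro i l
    rw [Matrix.mul_apply]
    rw [Finset.sum_eq_single (Sum.inl 0 : ι)]
    · rw [hQ0]
      by_cases hl : l = Sum.inl 0 <;> simp [hE, Matrix.single, hl, eq_comm]
    · intro k _ hk
      have : ¬ (Sum.inl 0 = k) := fun h => hk h.symm
      simp [hE, Matrix.single, this]
    · intro h; exact absurd (Finset.mem_univ _) h
  have hQEQ : ∀ i j, (Q * E * Qᵀ) i j = c * c := by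
    intro i j
    rw [Matrix.mul_apply]
    have : ∀ l, (Q * E) i l * Qᵀ l j = if l = Sum.inl 0 then c * Q j (Sum.inl 0) else 0 := by
      intro l
      rw [hQE, Matrix.transpose_apply]
      split_ifs with hl
      · subst hl; rfl
      · rw [zero_mul]
    rw [Finset.sum_congr rfl fun l _ => this l, Finset.sum_ite_eq' Finset.univ (Sum.inl 0)]
    rw [if_pos (Finset.mem_univ _), hQ0]
  have hDentry : ∀ i j, D i j = r * ((m : ℝ) + 1)⁻¹ + P i j := by
    intro i j
    rw [hD, hBsplit, Matrix.mul_add, Matrix.add_mul, Matrix.add_apply]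
    congr 1
    · rw [Matrix.mul_smul, Matrix.smul_mul, Matrix.smul_apply, hQEQ, hcc, smul_eq_mul]
  -- row sums of P vanish
  have hB0col : ∀ k, B0 k (Sum.inl 0) = 0 := by
    rintro (k | k) <;> simp [hB0, Matrix.fromBlocks]
  have hB0row : ∀ l, B0 (Sum.inl 0) l = 0 := by
    rintro (l | l) <;> simp [hB0, Matrix.fromBlocks]
  have hProw : ∀ i, ∑ j, P i j = 0 := by
    intro i
    have : ∀ j, P i j = ∑ l, (Q * B0) i l * Q j l := by
      intro j; rw [hP, Matrix.mul_apply]; rfl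
    rw [Finset.sum_congr rfl fun j _ => this j, Finset.sum_comm]
    rw [Finset.sum_congr rfl fun l _ => (Finset.mul_sum _ _ _).symm]
    rw [Finset.sum_congr rfl fun l (_ : l ∈ Finset.univ) => by rw [hcol l]]
    have hQB : (Q * B0) i (Sum.inl 0) = 0 := by
      rw [Matrix.mul_apply]
      exact Finset.sum_eq_zero fun k _ => by rw [hB0col k, mul_zero]
    rw [Finset.sum_eq_single (Sum.inl 0 : ι)]
    · rw [hQB, zero_mul]
    · intro l _ hl; rw [if_neg hl, mul_zero]
    · intro h; exact absurd (Finset.mem_univ _) h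
  have hPcol : ∀ j, ∑ i, P i j = 0 := by
    intro j
    have : ∀ i, P i j = ∑ k, Q i k * (B0 * Qᵀ) k j := by
      intro i; rw [hP, Matrix.mul_assoc, Matrix.mul_apply]
    rw [Finset.sum_congr rfl fun i _ => this i, Finset.sum_comm]
    rw [Finset.sum_congr rfl fun k _ => (Finset.sum_mul _ _ _).symm]
    rw [Finset.sum_congr rfl fun k (_ : k ∈ Finset.univ) => by rw [hcol k]]
    have hBQ : (B0 * Qᵀ) (Sum.inl 0) j = 0 := by
      rw [Matrix.mul_apply]
      exact Finset.sum_eq_zero fun l _ => by rw [hB0row l, zero_mul]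
    rw [Finset.sum_eq_single (Sum.inl 0 : ι)]
    · rw [hBQ, mul_zero]
    · intro k _ hk; rw [if_neg hk, zero_mul]
    · intro h; exact absurd (Finset.mem_univ _) h
  -- entries nonneg
  have hDnn : ∀ i j, 0 ≤ D i j := by
    intro i j
    rw [hDentry]
    have h1' : r * ((m : ℝ) + 1)⁻¹ = ∑ i', ∑ j', |P i' j'| := by
      rw [hr]; field_simp
    rw [h1']
    have h2 : |P i j| ≤ ∑ i', ∑ j', |P i' j'| := by
      calc |P i j| ≤ ∑ j', |P i j'| :=
            Finset.single_le_sum (f := fun j' => |P i j'|) (fun j' _ => abs_nonneg _) (Finset.mem_univ j)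
        _ ≤ ∑ i', ∑ j', |P i' j'| :=
            Finset.single_le_sum (f := fun i' => ∑ j', |P i' j'|)
              (fun i' _ =>
                Finset.sum_nonneg fun j' _ => abs_nonneg _) (Finset.mem_univ i)
    have := neg_abs_le (P i j)
    linarith
  -- sums
  have hcardι : (Fintype.card ι : ℝ) = (m : ℝ) + 1 := by
    simp [hι]; push_cast; ring
  have hDrow : ∀ i, ∑ j, D i j = r := by
    intro i
    rw [Finset.sum_congr rfl fun j _ => hDentry i j, Finset.sum_add_distrib, hProw,
      Finset.sum_const, Finset.card_univ, nsmul_eq_mul, hcardι, add_zero]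
    field_simp
  have hDcol : ∀ j, ∑ i, D i j = r := by
    intro j
    rw [Finset.sum_congr rfl fun i _ => hDentry i j, Finset.sum_add_distrib, hPcol,
      Finset.sum_const, Finset.card_univ, nsmul_eq_mul, hcardι, add_zero]
    field_simp
  -- charpoly
  have hBrcp : Br.charpoly = (X - C r) * q := by
    rw [hBr, Matrix.charpoly_fromBlocks_zero₁₂, hA]
    congr 1
    rw [Matrix.charpoly, Matrix.det_fin_one, charmatrix_apply_eq]
    rfl
  have hDcp : D.charpoly = (X - C r) * q := by
    rw [hD, charpoly_orth_conj Q Br h1, hBrcp]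
  -- final reindex
  set e : ι ≃ Fin (m + 1) := finSumFinEquiv.trans (finCongr (by omega)) with he
  refine ⟨r, hr0, Matrix.reindex e e D, ?_, ?_, ?_, ?_⟩
  · intro i j; exact hDnn _ _
  · intro i
    rw [show ∑ j, (Matrix.reindex e e D) i j = ∑ j, D (e.symm i) (e.symm j) from rfl]
    rw [Equiv.sum_comp e.symm (fun j => D (e.symm i) j)]
    exact hDrow _
  · intro j
    rw [show ∑ i, (Matrix.reindex e e D) i j = ∑ i, D (e.symm i) (e.symm j) from rfl]
    rw [Equiv.sum_comp e.symm (fun i => D i (e.symm j))]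
    exact hDcol _
  · have hre : (Matrix.reindex e e D).map Complex.ofReal
        = Matrix.reindex e e (D.map Complex.ofReal) := rfl
    rw [hre, Matrix.charpoly_reindex]
    have : D.map Complex.ofReal = D.map Complex.ofRealHom := rfl
    rw [this, Matrix.charpoly_map, hDcp, Polynomial.map_mul, Polynomial.map_sub,
      Polynomial.map_X, Polynomial.map_C, hqmap]
    rfl
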